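/- arXiv:1910.14186 — 6 statements merged into one kernel-verified Lean document; each statement's English description precedes it below -/
import Mathlib

section
/- Let z ∈ {0,1}^d be a random vector whose entries are i.i.d. Bernoulli(θ) with θ ∈ (0,1]. Then for matrices U ∈ ℝ^{a×d}, V ∈ ℝ^{b×d}, Y ∈ ℝ^{a×n}, X ∈ ℝ^{b×n}: E_z ‖Y − (1/θ) U diag(z) Vᵀ X‖_F² = ‖Y − U Vᵀ X‖_F² + ((1−θ)/θ) Σ_{i=1}^d ‖u_i‖₂² ‖Xᵀ v_i‖₂², where u_i, v_i are the i-th columns of U and V. -/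
open Finset


lemma sumA (d : ℕ) (f : Fin d → Bool → ℝ) :
    ∑ z : Fin d → Bool, ∏ i, f i (z i) = ∏ i, (f i false + f i true) := by
  rw [← Fintype.piFinset_univ, ← Finset.prod_univ_sum]
  congr 1; ext i
  simp [Fintype.sum_bool]; ring

lemma E0 (d : ℕ) (θ : ℝ) :
    ∑ z : Fin d → Bool, (∏ i, if z i then θ else 1 - θ) = 1 := by
  rw [sumA d (fun _ b => if b then θ else 1 - θ)]; simp

lemma E1 (d : ℕ) (θ : ℝ) (i : Fin d) :
    ∑ z : Fin d → Bool, (∏ k, if z k then θ else 1 - θ) * (if z i then (1:ℝ) else 0) = θ := by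
  have h : ∀ z : Fin d → Bool,
      (∏ k, if z k then θ else 1 - θ) * (if z i then (1:ℝ) else 0)
      = ∏ k, ((if z k then θ else 1 - θ) * (if k = i then (if z k then (1:ℝ) else 0) else 1)) := by
    intro z
    rw [Finset.prod_mul_distrib, Finset.prod_ite_eq' Finset.univ i]
    simp
  simp only [h]
  rw [sumA d (fun k b => (if b then θ else 1 - θ) * (if k = i then (if b then (1:ℝ) else 0) else 1))]
  have h2 : ∀ k : Fin d,
      ((1 - θ) * (if k = i then (0:ℝ) else 1) + θ * (if k = i then (1:ℝ) else 1))
      = if k = i then θ else 1 := by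
    intro k; by_cases hk : k = i <;> simp [hk]
  simp only [Bool.ite_eq_true_distrib, if_true, if_false] -- may not be needed
  simp only [show ((false:Bool) = true) = False by simp, show ((true:Bool) = true) = True by simp,
    if_true, if_false]
  rw [Finset.prod_congr rfl (fun k _ => h2 k), Finset.prod_ite_eq' Finset.univ i]
  simp

lemma E2 (d : ℕ) (θ : ℝ) (i j : Fin d) (hij : i ≠ j) :
    ∑ z : Fin d → Bool, (∏ k, if z k then θ else 1 - θ) *
      ((if z i then (1:ℝ) else 0) * (if z j then (1:ℝ) else 0)) = θ ^ 2 := by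
  have h : ∀ z : Fin d → Bool,
      (∏ k, if z k then θ else 1 - θ) * ((if z i then (1:ℝ) else 0) * (if z j then (1:ℝ) else 0))
      = ∏ k, ((if z k then θ else 1 - θ) * (if k = i then (if z k then (1:ℝ) else 0) else 1)
          * (if k = j then (if z k then (1:ℝ) else 0) else 1)) := by
    intro z
    rw [Finset.prod_mul_distrib, Finset.prod_mul_distrib,
      Finset.prod_ite_eq' Finset.univ i, Finset.prod_ite_eq' Finset.univ j]
    simp
  simp only [h]
  rw [sumA d (fun k b => (if b then θ else 1 - θ) * (if k = i then (if b then (1:ℝ) else 0) else 1)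
      * (if k = j then (if b then (1:ℝ) else 0) else 1))]
  have h2 : ∀ k : Fin d,
      ((1 - θ) * (if k = i then (0:ℝ) else 1) * (if k = j then (0:ℝ) else 1)
      + θ * (if k = i then (1:ℝ) else 1) * (if k = j then (1:ℝ) else 1))
      = (if k = i then θ else 1) * (if k = j then θ else 1) := by
    intro k
    by_cases h1 : k = i <;> by_cases h2 : k = j
    · exact absurd (h1 ▸ h2.symm ▸ rfl : i = j) hij
    all_goals simp [h1, h2, hij, Ne.symm hij]
  simp only [show ((false:Bool) = true) = False by simp, show ((true:Bool) = true) = True by simp,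
    if_true, if_false]
  rw [Finset.prod_congr rfl (fun k _ => h2 k), Finset.prod_mul_distrib,
    Finset.prod_ite_eq' Finset.univ i, Finset.prod_ite_eq' Finset.univ j]
  simp; ring

lemma Epair (d : ℕ) (θ : ℝ) (i j : Fin d) :
    ∑ z : Fin d → Bool, (∏ k, if z k then θ else 1 - θ) *
      ((if z i then (1:ℝ) else 0) * (if z j then (1:ℝ) else 0))
    = if i = j then θ else θ ^ 2 := by
  by_cases h : i = j
  · subst h
    simp only [if_pos rfl]
    have : ∀ z : Fin d → Bool, ((if z i then (1:ℝ) else 0) * (if z i then (1:ℝ) else 0))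
        = (if z i then (1:ℝ) else 0) := by intro z; by_cases hz : z i <;> simp [hz]
    simp only [this]
    exact E1 d θ i
  · rw [if_neg h]; exact E2 d θ i j h

lemma key (d : ℕ) (θ : ℝ) (hθ0 : 0 < θ) (y : ℝ) (c : Fin d → ℝ) :
    ∑ z : Fin d → Bool, (∏ k, if z k then θ else 1 - θ) *
      (y - (1 / θ) * ∑ i, c i * (if z i then (1:ℝ) else 0)) ^ 2
    = (y - ∑ i, c i) ^ 2 + ((1 - θ) / θ) * ∑ i, (c i) ^ 2 := by
  have hθ : θ ≠ 0 := ne_of_gt hθ0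
  have expand : ∀ z : Fin d → Bool,
      (∏ k, if z k then θ else 1 - θ) *
        (y - (1 / θ) * ∑ i, c i * (if z i then (1:ℝ) else 0)) ^ 2
      = y ^ 2 * (∏ k, if z k then θ else 1 - θ)
        - (2 * y / θ) * ∑ i, c i * ((∏ k, if z k then θ else 1 - θ) * (if z i then (1:ℝ) else 0))
        + (1 / θ ^ 2) * ∑ i, ∑ j, (c i * c j) *
            ((∏ k, if z k then θ else 1 - θ) *
              ((if z i then (1:ℝ) else 0) * (if z j then (1:ℝ) else 0))) := by
    intro z
    have hA : (∑ i, c i * ((∏ k, if z k then θ else 1 - θ) * (if z i then (1:ℝ) else 0)))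
        = (∏ k, if z k then θ else 1 - θ) * ∑ i, c i * (if z i then (1:ℝ) else 0) := by
      rw [Finset.mul_sum]
      exact Finset.sum_congr rfl fun i _ => by ring
    have hB : (∑ i, ∑ j, (c i * c j) *
          ((∏ k, if z k then θ else 1 - θ) *
            ((if z i then (1:ℝ) else 0) * (if z j then (1:ℝ) else 0))))
        = (∏ k, if z k then θ else 1 - θ) * (∑ i, c i * (if z i then (1:ℝ) else 0)) ^ 2 := by
      rw [sq, Finset.sum_mul_sum, Finset.mul_sum]
      refine Finset.sum_congr rfl fun i _ => ?_
      rw [Finset.mul_sum]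
      exact Finset.sum_congr rfl fun j _ => by ring
    rw [hA, hB]
    field_simp
    ring
  simp only [expand]
  rw [Finset.sum_add_distrib, Finset.sum_sub_distrib]
  have T1 : ∑ z : Fin d → Bool, y ^ 2 * (∏ k, if z k then θ else 1 - θ) = y ^ 2 := by
    rw [← Finset.mul_sum, E0, mul_one]
  have T2 : ∑ z : Fin d → Bool,
      (2 * y / θ) * ∑ i, c i * ((∏ k, if z k then θ else 1 - θ) * (if z i then (1:ℝ) else 0))
      = 2 * y * ∑ i, c i := by
    rw [← Finset.mul_sum, Finset.sum_comm]
    have : ∀ i : Fin d, (∑ z : Fin d → Bool,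
        c i * ((∏ k, if z k then θ else 1 - θ) * (if z i then (1:ℝ) else 0))) = c i * θ := by
      intro i; rw [← Finset.mul_sum, E1]
    rw [Finset.sum_congr rfl fun i _ => this i, ← Finset.sum_mul]
    field_simp
  have T3 : ∑ z : Fin d → Bool,
      (1 / θ ^ 2) * ∑ i, ∑ j, (c i * c j) *
          ((∏ k, if z k then θ else 1 - θ) *
            ((if z i then (1:ℝ) else 0) * (if z j then (1:ℝ) else 0)))
      = (∑ i, c i) ^ 2 + ((1 - θ) / θ) * ∑ i, (c i) ^ 2 := by
    rw [← Finset.mul_sum, Finset.sum_comm]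
    have hin : ∀ i : Fin d, (∑ z : Fin d → Bool, ∑ j, (c i * c j) *
        ((∏ k, if z k then θ else 1 - θ) *
          ((if z i then (1:ℝ) else 0) * (if z j then (1:ℝ) else 0))))
        = ∑ j, (c i * c j) * (if i = j then θ else θ ^ 2) := by
      intro i
      rw [Finset.sum_comm]
      exact Finset.sum_congr rfl fun j _ => by rw [← Finset.mul_sum, Epair]
    rw [Finset.sum_congr rfl fun i _ => hin i]
    have split : ∀ i : Fin d, (∑ j, (c i * c j) * (if i = j then θ else θ ^ 2))
        = (∑ j, (c i * c j)) * θ ^ 2 + c i ^ 2 * (θ - θ ^ 2) := by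
      intro i
      have : ∀ j : Fin d, (c i * c j) * (if i = j then θ else θ ^ 2)
          = (c i * c j) * θ ^ 2 + (if i = j then c i * c j * (θ - θ ^ 2) else 0) := by
        intro j; by_cases h : i = j <;> simp [h] <;> ring
      rw [Finset.sum_congr rfl fun j _ => this j, Finset.sum_add_distrib, Finset.sum_ite_eq,
        if_pos (Finset.mem_univ i), ← Finset.sum_mul]
      ring
    rw [Finset.sum_congr rfl fun i _ => split i, Finset.sum_add_distrib, ← Finset.sum_mul,
      ← Finset.sum_mul]
    have : (∑ i : Fin d, ∑ j, c i * c j) = (∑ i, c i) ^ 2 := by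
      rw [sq, Finset.sum_mul_sum]
    rw [this]
    field_simp
  rw [T1, T2, T3]
  ring

/-- Dropout on a single hidden-layer linear network: the expected stochastic objective
equals the deterministic objective plus the Dropout regularizer. -/
theorem stmt1 (a b d n : ℕ) (θ : ℝ) (hθ0 : 0 < θ) (hθ1 : θ ≤ 1)
    (U : Matrix (Fin a) (Fin d) ℝ) (V : Matrix (Fin b) (Fin d) ℝ)
    (Y : Matrix (Fin a) (Fin n) ℝ) (X : Matrix (Fin b) (Fin n) ℝ) :
    ∑ z : Fin d → Bool, (∏ i, if z i then θ else 1 - θ) *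
      (∑ p, ∑ q, ((Y - (1 / θ) •
        (U * Matrix.diagonal (fun i => if z i then (1 : ℝ) else 0) * V.transpose * X)) p q) ^ 2)
    = (∑ p, ∑ q, ((Y - U * V.transpose * X) p q) ^ 2)
      + ((1 - θ) / θ) * ∑ i, (∑ p, (U p i) ^ 2) * (∑ q, (∑ p, X p q * V p i) ^ 2) := by
  have hθ : θ ≠ 0 := ne_of_gt hθ0
  set s : Fin d → Fin n → ℝ := fun i q => ∑ r, X r q * V r i with hs
  have entryD : ∀ (e : Fin d → ℝ) (p : Fin a) (q : Fin n),
      (U * Matrix.diagonal e * V.transpose * X) p q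
      = ∑ i, (U p i * s i q) * e i := by
    intro e p q
    simp only [Matrix.mul_apply, Matrix.transpose_apply, Matrix.diagonal_apply, mul_ite, mul_zero,
      Finset.sum_ite_eq', Finset.mem_univ, if_true, ite_mul, zero_mul, Finset.sum_ite_eq]
    calc (∑ r, (∑ i, U p i * e i * V r i) * X r q)
        = ∑ r, ∑ i, (U p i * e i * V r i) * X r q :=
          Finset.sum_congr rfl fun r _ => Finset.sum_mul _ _ _
      _ = ∑ i, ∑ r, (U p i * e i * V r i) * X r q := Finset.sum_comm
      _ = ∑ i, (U p i * s i q) * e i := by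
          refine Finset.sum_congr rfl fun i _ => ?_
          simp only [hs, Finset.mul_sum, Finset.sum_mul]
          exact Finset.sum_congr rfl fun r _ => by ring
  have entry1 : ∀ (p : Fin a) (q : Fin n),
      (U * V.transpose * X) p q = ∑ i, U p i * s i q := by
    intro p q
    have h : U * V.transpose * X = U * (Matrix.diagonal (fun _ => (1:ℝ)) : Matrix (Fin d) (Fin d) ℝ) * V.transpose * X := by
      rw [Matrix.diagonal_one, Matrix.mul_one]
    rw [h, entryD]
    simp
  have LHSswap : ∑ z : Fin d → Bool, (∏ i, if z i then θ else 1 - θ) *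
      (∑ p, ∑ q, ((Y - (1 / θ) •
        (U * Matrix.diagonal (fun i => if z i then (1 : ℝ) else 0) * V.transpose * X)) p q) ^ 2)
      = ∑ p, ∑ q, ∑ z : Fin d → Bool, (∏ k, if z k then θ else 1 - θ) *
          ((Y p q) - (1 / θ) * ∑ i, (U p i * s i q) * (if z i then (1:ℝ) else 0)) ^ 2 := by
    have h1 : ∀ z : Fin d → Bool, (∏ i, if z i then θ else 1 - θ) *
        (∑ p, ∑ q, ((Y - (1 / θ) •
          (U * Matrix.diagonal (fun i => if z i then (1 : ℝ) else 0) * V.transpose * X)) p q) ^ 2)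
        = ∑ p, ∑ q, (∏ k, if z k then θ else 1 - θ) *
            ((Y p q) - (1 / θ) * ∑ i, (U p i * s i q) * (if z i then (1:ℝ) else 0)) ^ 2 := by
      intro z
      rw [Finset.mul_sum]
      refine Finset.sum_congr rfl fun p _ => ?_
      rw [Finset.mul_sum]
      refine Finset.sum_congr rfl fun q _ => ?_
      congr 2
      simp only [Matrix.sub_apply, Matrix.smul_apply, smul_eq_mul, entryD]
    rw [Finset.sum_congr rfl fun z _ => h1 z, Finset.sum_comm]
    refine Finset.sum_congr rfl fun p _ => ?_
    exact Finset.sum_comm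
  rw [LHSswap]
  have keyed : ∀ (p : Fin a) (q : Fin n),
      (∑ z : Fin d → Bool, (∏ k, if z k then θ else 1 - θ) *
        ((Y p q) - (1 / θ) * ∑ i, (U p i * s i q) * (if z i then (1:ℝ) else 0)) ^ 2)
      = ((Y - U * V.transpose * X) p q) ^ 2 + ((1 - θ) / θ) * ∑ i, (U p i * s i q) ^ 2 := by
    intro p q
    rw [key d θ hθ0 (Y p q) (fun i => U p i * s i q), Matrix.sub_apply, entry1]
  rw [Finset.sum_congr rfl fun p _ => Finset.sum_congr rfl fun q _ => keyed p q]
  rw [Finset.sum_congr rfl fun p _ => Finset.sum_add_distrib, Finset.sum_add_distrib]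
  congr 1
  have h2 : ∀ p : Fin a, (∑ q, ((1 - θ) / θ) * ∑ i, (U p i * s i q) ^ 2)
      = ((1 - θ) / θ) * ∑ q, ∑ i, (U p i * s i q) ^ 2 := fun p => (Finset.mul_sum _ _ _).symm
  rw [Finset.sum_congr rfl fun p _ => h2 p, ← Finset.mul_sum]
  congr 1
  calc (∑ p, ∑ q, ∑ i, (U p i * s i q) ^ 2)
      = ∑ p, ∑ i, ∑ q, (U p i * s i q) ^ 2 :=
        Finset.sum_congr rfl fun p _ => Finset.sum_comm
    _ = ∑ i, ∑ p, ∑ q, (U p i * s i q) ^ 2 := Finset.sum_comm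
    _ = ∑ i, (∑ p, (U p i) ^ 2) * (∑ q, (s i q) ^ 2) := by
        refine Finset.sum_congr rfl fun i _ => ?_
        rw [Finset.sum_mul]
        refine Finset.sum_congr rfl fun p _ => ?_
        rw [Finset.mul_sum]
        exact Finset.sum_congr rfl fun q _ => by rw [mul_pow]
    _ = ∑ i, (∑ p, (U p i) ^ 2) * (∑ q, (∑ p, X p q * V p i) ^ 2) := rfl
end

section
/- Let z ∈ ℝ^d be a random vector with mean μ (all entries nonzero) and covariance matrix C with entries c_{ij}. Then for U ∈ ℝ^{a×d}, V ∈ ℝ^{n×d}, Y ∈ ℝ^{a×n}: E_z ‖Y − U diag(μ)^{-1} diag(z) Vᵀ‖_F² = ‖Y − U Vᵀ‖_F² + Σ_{i,j=1}^d c_{ij} (u_iᵀ u_j)(v_iᵀ v_j)/(μ_i μ_j). -/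
open MeasureTheory Finset

private lemma aux_comm3 {ι₁ ι₂ ι₃ : Type*} [Fintype ι₁] [Fintype ι₂] [Fintype ι₃]
    (g : ι₁ → ι₂ → ι₃ → ℝ) :
    ∑ p, ∑ q, ∑ i, g p q i = ∑ i, ∑ p, ∑ q, g p q i := by
  calc ∑ p, ∑ q, ∑ i, g p q i = ∑ p, ∑ i, ∑ q, g p q i :=
        Finset.sum_congr rfl fun p _ => Finset.sum_comm
    _ = ∑ i, ∑ p, ∑ q, g p q i := Finset.sum_comm

private lemma aux_comm4 {ι₁ ι₂ ι₃ ι₄ : Type*} [Fintype ι₁] [Fintype ι₂] [Fintype ι₃] [Fintype ι₄]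
    (g : ι₁ → ι₂ → ι₃ → ι₄ → ℝ) :
    ∑ p, ∑ q, ∑ i, ∑ j, g p q i j = ∑ i, ∑ j, ∑ p, ∑ q, g p q i j := by
  rw [aux_comm3 (fun p q i => ∑ j, g p q i j)]
  exact Finset.sum_congr rfl fun i _ => aux_comm3 (fun p q j => g p q i j)

private lemma aux_pull {ι₁ ι₂ : Type*} [Fintype ι₁] [Fintype ι₂] (g : ι₁ → ι₂ → ℝ) (k : ℝ) :
    ∑ p, ∑ q, g p q * k = (∑ p, ∑ q, g p q) * k := by
  rw [Finset.sum_mul]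
  exact Finset.sum_congr rfl fun p _ => (Finset.sum_mul _ _ _).symm


/-- Generalized Dropout: for a random vector `z` with mean `μv` (entrywise nonzero) and
covariance `c`, the expected stochastic objective equals the deterministic objective plus
the generalized Dropout regularizer `Σ_{i,j} c_{ij} (u_iᵀu_j)(v_iᵀv_j)/(μ_i μ_j)`. -/
theorem stmt3 {Ω : Type*} [MeasurableSpace Ω] (P : Measure Ω) [IsProbabilityMeasure P]
    (a n d : ℕ) (z : Ω → Fin d → ℝ) (hz : ∀ i, MemLp (fun ω => z ω i) 2 P)
    (μv : Fin d → ℝ) (hμ : ∀ i, μv i ≠ 0) (hμdef : ∀ i, μv i = ∫ ω, z ω i ∂P)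
    (c : Fin d → Fin d → ℝ)
    (hc : ∀ i j, c i j = ∫ ω, (z ω i - μv i) * (z ω j - μv j) ∂P)
    (U : Matrix (Fin a) (Fin d) ℝ) (V : Matrix (Fin n) (Fin d) ℝ)
    (Y : Matrix (Fin a) (Fin n) ℝ) :
    ∫ ω, (∑ p, ∑ q,
        ((Y - U * Matrix.diagonal (fun i => z ω i / μv i) * V.transpose) p q) ^ 2) ∂P
    = (∑ p, ∑ q, ((Y - U * V.transpose) p q) ^ 2)
      + ∑ i, ∑ j, c i j * ((∑ p, U p i * U p j) * (∑ q, V q i * V q j)) / (μv i * μv j) := by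
  classical
  set f : Fin d → Ω → ℝ := fun i ω => (μv i)⁻¹ * (z ω i - μv i) with hfdef
  have hf2 : ∀ i, MemLp (f i) 2 P := fun i =>
    ((hz i).sub (memLp_const (μv i))).const_mul _
  have hzint : ∀ i, Integrable (fun ω => z ω i) P := fun i => (hz i).integrable one_le_two
  have hfint : ∀ i, Integrable (f i) P := fun i => (hf2 i).integrable one_le_two
  have hfzero : ∀ i, ∫ ω, f i ω ∂P = 0 := by
    intro i
    simp only [hfdef]
    rw [integral_const_mul, integral_sub (hzint i) (integrable_const _), integral_const]
    simp [← hμdef i]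
  have hffint : ∀ i j, Integrable (fun ω => f i ω * f j ω) P := by
    intro i j
    have := ((hf2 j).smul (hf2 i) (r := 1)).integrable le_rfl
    exact this
  have hffval : ∀ i j, ∫ ω, f i ω * f j ω ∂P = c i j / (μv i * μv j) := by
    intro i j
    have h1 : ∀ ω, f i ω * f j ω
        = (μv i * μv j)⁻¹ * ((z ω i - μv i) * (z ω j - μv j)) := by
      intro ω; simp only [hfdef]; field_simp
    simp only [h1]
    rw [integral_const_mul, ← hc i j, inv_mul_eq_div]
  set A : Matrix (Fin a) (Fin n) ℝ := Y - U * V.transpose with hA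
  set K : Fin d → ℝ := fun i => ∑ p, ∑ q, -2 * A p q * (U p i * V q i) with hK
  set M : Fin d → Fin d → ℝ :=
    fun i j => ∑ p, ∑ q, (U p i * V q i) * (U p j * V q j) with hM
  have key : ∀ ω, (∑ p, ∑ q,
        ((Y - U * Matrix.diagonal (fun i => z ω i / μv i) * V.transpose) p q) ^ 2)
      = (∑ p, ∑ q, (A p q) ^ 2)
        + ((∑ i, K i * f i ω) + ∑ i, ∑ j, M i j * (f i ω * f j ω)) := by
    intro ω
    have hw : ∀ i, z ω i / μv i = 1 + f i ω := by
      intro i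
      have h0 := hμ i
      simp only [hfdef]
      field_simp
      ring
    have hentry : ∀ p q,
        ((Y - U * Matrix.diagonal (fun i => z ω i / μv i) * V.transpose) p q)
        = A p q - ∑ i, (U p i * V q i) * f i ω := by
      intro p q
      have hApq : A p q = Y p q - ∑ i, U p i * V q i := by
        simp [hA, Matrix.sub_apply, Matrix.mul_apply, Matrix.transpose_apply]
      simp only [Matrix.sub_apply, Matrix.mul_apply, Matrix.transpose_apply,
        Matrix.diagonal_apply, mul_ite, mul_zero, ite_mul, zero_mul,
        Finset.sum_ite_eq, Finset.sum_ite_eq', Finset.mem_univ, if_true, hw, hApq]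
      rw [show (∑ i, U p i * (1 + f i ω) * V q i)
          = ∑ i, (U p i * V q i + (U p i * V q i) * f i ω) from
        Finset.sum_congr rfl (fun i _ => by ring), Finset.sum_add_distrib]
      ring
    have hsq : ∀ p q, (A p q - ∑ i, (U p i * V q i) * f i ω) ^ 2
        = A p q ^ 2 + ((∑ i, -2 * A p q * (U p i * V q i) * f i ω)
            + ∑ i, ∑ j, ((U p i * V q i) * (U p j * V q j)) * (f i ω * f j ω)) := by
      intro p q
      have ht2 : (∑ i, (U p i * V q i) * f i ω) ^ 2
          = ∑ i, ∑ j, ((U p i * V q i) * (U p j * V q j)) * (f i ω * f j ω) := by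
        rw [sq, Finset.sum_mul_sum]
        exact Finset.sum_congr rfl fun i _ => Finset.sum_congr rfl fun j _ => by ring
      have hmid : -2 * A p q * (∑ i, (U p i * V q i) * f i ω)
          = ∑ i, -2 * A p q * (U p i * V q i) * f i ω := by
        rw [Finset.mul_sum]
        exact Finset.sum_congr rfl fun i _ => by ring
      rw [sub_sq', ← ht2, ← hmid]
      ring
    simp only [hentry, hsq, Finset.sum_add_distrib]
    congr 1
    congr 1
    · -- middle term
      rw [aux_comm3 (fun p q i => -2 * A p q * (U p i * V q i) * f i ω)]
      exact Finset.sum_congr rfl fun i _ => by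
        rw [hK]
        rw [show (∑ p, ∑ q, -2 * A p q * (U p i * V q i)) * f i ω
            = ∑ p, ∑ q, -2 * A p q * (U p i * V q i) * f i ω from by
          rw [← aux_pull]]
    · -- quadratic term
      rw [aux_comm4 (fun p q i j => ((U p i * V q i) * (U p j * V q j)) * (f i ω * f j ω))]
      exact Finset.sum_congr rfl fun i _ => Finset.sum_congr rfl fun j _ => by
        rw [hM, ← aux_pull]
  simp only [key]
  have int1 : Integrable (fun ω => ∑ i, K i * f i ω) P :=
    integrable_finset_sum _ fun i _ => (hfint i).const_mul (K i)
  have int2 : Integrable (fun ω => ∑ i, ∑ j, M i j * (f i ω * f j ω)) P :=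
    integrable_finset_sum _ fun i _ =>
      integrable_finset_sum _ fun j _ => (hffint i j).const_mul (M i j)
  have int12 : Integrable (fun ω => (∑ i, K i * f i ω)
      + ∑ i, ∑ j, M i j * (f i ω * f j ω)) P := int1.add int2
  rw [integral_add (integrable_const _) int12, integral_const,
    integral_add int1 int2, integral_finset_sum _ fun i _ => (hfint i).const_mul (K i),
    integral_finset_sum _ fun i _ =>
      integrable_finset_sum _ fun j _ => (hffint i j).const_mul (M i j)]
  simp only [integral_const_mul, hfzero, mul_zero, Finset.sum_const_zero, zero_add,
    measure_univ, probReal_univ, ENNReal.toReal_one, smul_eq_mul, one_mul]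
  congr 1
  refine Finset.sum_congr rfl fun i _ => ?_
  rw [integral_finset_sum _ fun j _ => (hffint i j).const_mul (M i j)]
  refine Finset.sum_congr rfl fun j _ => ?_
  rw [integral_const_mul, hffval i j]
  have hMM : M i j = (∑ p, U p i * U p j) * (∑ q, V q i * V q j) := by
    rw [hM, Finset.sum_mul_sum]
    exact Finset.sum_congr rfl fun p _ => Finset.sum_congr rfl fun q _ => by ring
  rw [hMM]
  ring
end

section
/- For U ∈ ℝ^{a×d}, V ∈ ℝ^{b×d}, X ∈ ℝ^{b×n}, define Ω(U,V) = Σ_{i=1}^{d/r} ‖U_i V_iᵀ X‖_F² where U_i, V_i are consecutive column blocks of width r. If Ū = (1/√2)[U U] and V̄ = (1/√2)[V V] (concatenation along columns), then Ū V̄ᵀ X = U Vᵀ X and Ω(Ū, V̄) = (1/2) Ω(U, V). -/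
open Finset

/-- Duplicating the factors with a `1/√2` rescaling preserves the product `U Vᵀ X`
but halves the DropBlock regularizer `Ω(U,V) = Σ_i ‖U_i V_iᵀ X‖_F²`.
Columns are indexed by `Fin k × Fin r` (blocks of width `r`), and the duplicated
factors by `(Bool × Fin k) × Fin r` (two copies of each block). -/
theorem stmt6 (a b n k r : ℕ)
    (U : Matrix (Fin a) (Fin k × Fin r) ℝ) (V : Matrix (Fin b) (Fin k × Fin r) ℝ)
    (X : Matrix (Fin b) (Fin n) ℝ)
    (Ubar : Matrix (Fin a) ((Bool × Fin k) × Fin r) ℝ)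
    (Vbar : Matrix (Fin b) ((Bool × Fin k) × Fin r) ℝ)
    (hU : ∀ p e i s, Ubar p ((e, i), s) = U p (i, s) / Real.sqrt 2)
    (hV : ∀ l e i s, Vbar l ((e, i), s) = V l (i, s) / Real.sqrt 2) :
    Ubar * Vbar.transpose * X = U * V.transpose * X ∧
    (∑ c : Bool × Fin k, ∑ p, ∑ q,
        (∑ s : Fin r, Ubar p (c, s) * (∑ l, Vbar l (c, s) * X l q)) ^ 2)
      = (1 / 2) * ∑ i : Fin k, ∑ p, ∑ q,
        (∑ s : Fin r, U p (i, s) * (∑ l, V l (i, s) * X l q)) ^ 2 := by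
  have h2 : Real.sqrt 2 * Real.sqrt 2 = 2 := Real.mul_self_sqrt (by norm_num)
  have hmul : Ubar * Vbar.transpose = U * V.transpose := by
    ext p l
    simp only [Matrix.mul_apply, Matrix.transpose_apply, Fintype.sum_prod_type,
      Fintype.sum_bool, hU, hV]
    rw [← Finset.sum_add_distrib]
    congr 1; ext i
    rw [← Finset.sum_add_distrib]
    congr 1; ext s
    field_simp
    rw [Real.sq_sqrt (by norm_num : (0:ℝ) ≤ 2)]; ring
  constructor
  · rw [hmul]
  · have key : ∀ (e : Bool) (i : Fin k) (p : Fin a) (q : Fin n),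
        (∑ s : Fin r, Ubar p ((e, i), s) * (∑ l, Vbar l ((e, i), s) * X l q))
          = (∑ s : Fin r, U p (i, s) * (∑ l, V l (i, s) * X l q)) / 2 := by
      intro e i p q
      rw [Finset.sum_div]
      congr 1; ext s
      simp only [hU, hV]
      rw [Finset.sum_congr rfl (fun l _ => by rw [div_mul_eq_mul_div]),
        ← Finset.sum_div]
      field_simp
      rw [Real.sq_sqrt (by norm_num : (0:ℝ) ≤ 2)]; ring
    simp only [Fintype.sum_prod_type, Fintype.sum_bool]
    rw [Finset.mul_sum]
    rw [← Finset.sum_add_distrib]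
    congr 1; ext i
    simp only [key]
    rw [← Finset.sum_add_distrib, Finset.mul_sum]
    congr 1; ext p
    rw [← Finset.sum_add_distrib, Finset.mul_sum]
    congr 1; ext q
    ring
end

section
/- Let f: matrices → ℝ be defined by f(A) = inf over d and factorizations A = U Vᵀ X of (Σ_{i=1}^{d/r} ‖U_i V_iᵀ X‖_F)². Then the function ω(A) = inf over factorizations of Σ_i ‖U_i V_iᵀ X‖_F is positively homogeneous and subadditive (a gauge), and hence f = ω² is convex. -/
open Finset

namespace Stmt8Aux

variable {a b n r : ℕ}

noncomputable def tval (X : Matrix (Fin b) (Fin n) ℝ) {k : ℕ}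
    (U : Matrix (Fin a) (Fin k × Fin r) ℝ) (V : Matrix (Fin b) (Fin k × Fin r) ℝ) : ℝ :=
  ∑ i : Fin k, Real.sqrt (∑ p, ∑ q,
    (∑ s : Fin r, U p (i, s) * (∑ l, V l (i, s) * X l q)) ^ 2)

def S (r : ℕ) (X : Matrix (Fin b) (Fin n) ℝ) (A : Matrix (Fin a) (Fin n) ℝ) : Set ℝ :=
  { t | ∃ (k : ℕ) (_ : 1 ≤ k) (U : Matrix (Fin a) (Fin k × Fin r) ℝ)
      (V : Matrix (Fin b) (Fin k × Fin r) ℝ),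
      U * V.transpose * X = A ∧ t = tval X U V }

lemma tval_nonneg (X : Matrix (Fin b) (Fin n) ℝ) {k : ℕ}
    (U : Matrix (Fin a) (Fin k × Fin r) ℝ) (V : Matrix (Fin b) (Fin k × Fin r) ℝ) :
    0 ≤ tval X U V :=
  Finset.sum_nonneg fun _ _ => Real.sqrt_nonneg _

lemma S_nonneg {X : Matrix (Fin b) (Fin n) ℝ} {A : Matrix (Fin a) (Fin n) ℝ}
    {t : ℝ} (ht : t ∈ S r X A) : 0 ≤ t := by
  obtain ⟨k, _, U, V, _, rfl⟩ := ht
  exact tval_nonneg X U V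

lemma S_bddBelow (X : Matrix (Fin b) (Fin n) ℝ) (A : Matrix (Fin a) (Fin n) ℝ) :
    BddBelow (S r X A) :=
  ⟨0, fun _ ht => S_nonneg ht⟩

lemma exists_left_inv (X : Matrix (Fin b) (Fin n) ℝ) (hX : X.rank = n) :
    ∃ Y : Matrix (Fin n) (Fin b) ℝ, Y * X = 1 := by
  have hinj : LinearMap.ker X.mulVecLin = ⊥ := by
    have h1 := LinearMap.finrank_range_add_finrank_ker X.mulVecLin
    rw [Matrix.rank] at hX
    rw [hX] at h1
    simp only [Module.finrank_fin_fun] at h1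
    have : Module.finrank ℝ (LinearMap.ker X.mulVecLin) = 0 := by omega
    exact Submodule.finrank_eq_zero.mp this
  obtain ⟨g, hg⟩ := LinearMap.exists_leftInverse_of_injective X.mulVecLin hinj
  refine ⟨LinearMap.toMatrix' g, ?_⟩
  have : X.mulVecLin = Matrix.toLin' X := rfl
  calc LinearMap.toMatrix' g * X
      = LinearMap.toMatrix' g * LinearMap.toMatrix' (Matrix.toLin' X) := by
        rw [LinearMap.toMatrix'_toLin']
    _ = LinearMap.toMatrix' (g ∘ₗ Matrix.toLin' X) := (LinearMap.toMatrix'_comp _ _).symm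
    _ = 1 := by rw [← this, hg]; simp

lemma S_nonempty (hr : 1 ≤ r) (X : Matrix (Fin b) (Fin n) ℝ)
    (Y : Matrix (Fin n) (Fin b) ℝ) (hY : Y * X = 1) (A : Matrix (Fin a) (Fin n) ℝ) :
    (S r X A).Nonempty := by
  classical
  set M : Matrix (Fin a) (Fin b) ℝ := A * Y with hM
  set s0 : Fin r := ⟨0, hr⟩ with hs0
  set U : Matrix (Fin a) (Fin (b+1) × Fin r) ℝ := fun p x =>
    if x.2 = s0 then (if h : (x.1 : ℕ) < b then M p ⟨x.1, h⟩ else 0) else 0 with hU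
  set V : Matrix (Fin b) (Fin (b+1) × Fin r) ℝ := fun l x =>
    if x.1 = Fin.castSucc l ∧ x.2 = s0 then 1 else 0 with hV
  have hUV : U * V.transpose = M := by
    ext p l
    rw [Matrix.mul_apply]
    rw [Fintype.sum_prod_type]
    rw [Finset.sum_eq_single (Fin.castSucc l)]
    · rw [Finset.sum_eq_single s0]
      · rw [Matrix.transpose_apply]; simp [hU, hV, Matrix.transpose_apply, Fin.is_lt]
      · intro s _ hs
        simp [hU, hV, Matrix.transpose_apply, hs]
      · simp
    · intro i _ hi
      apply Finset.sum_eq_zero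
      intro s _
      rw [Matrix.transpose_apply]; simp [hV, Matrix.transpose_apply, hi]
    · simp
  exact ⟨tval X U V, b + 1, Nat.succ_le_succ (Nat.zero_le _), U, V, by
    rw [hUV, hM, Matrix.mul_assoc, hY, Matrix.mul_one], rfl⟩

lemma smul_mem {X : Matrix (Fin b) (Fin n) ℝ} {A : Matrix (Fin a) (Fin n) ℝ}
    {t : ℝ} (ht : t ∈ S r X A) {c : ℝ} (hc : 0 ≤ c) : c * t ∈ S r X (c • A) := by
  obtain ⟨k, hk, U, V, hUV, rfl⟩ := ht
  refine ⟨k, hk, c • U, V, by rw [Matrix.smul_mul, Matrix.smul_mul, hUV], ?_⟩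
  unfold tval
  rw [Finset.mul_sum]
  refine Finset.sum_congr rfl fun i _ => ?_
  have : ∀ p q, (∑ s : Fin r, (c • U) p (i, s) * (∑ l, V l (i, s) * X l q)) ^ 2
      = c ^ 2 * (∑ s : Fin r, U p (i, s) * (∑ l, V l (i, s) * X l q)) ^ 2 := by
    intro p q
    rw [← mul_pow, Finset.mul_sum]
    congr 1
    refine Finset.sum_congr rfl fun s _ => ?_
    simp [Matrix.smul_apply, mul_assoc]
  simp only [this, ← Finset.mul_sum]
  rw [Real.sqrt_mul (sq_nonneg c), Real.sqrt_sq_eq_abs, abs_of_nonneg hc]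

lemma add_mem {X : Matrix (Fin b) (Fin n) ℝ} {A B : Matrix (Fin a) (Fin n) ℝ}
    {t₁ t₂ : ℝ} (h₁ : t₁ ∈ S r X A) (h₂ : t₂ ∈ S r X B) : t₁ + t₂ ∈ S r X (A + B) := by
  obtain ⟨k₁, hk₁, U₁, V₁, hUV₁, rfl⟩ := h₁
  obtain ⟨k₂, hk₂, U₂, V₂, hUV₂, rfl⟩ := h₂
  set U : Matrix (Fin a) (Fin (k₁ + k₂) × Fin r) ℝ := fun p x =>
    Fin.addCases (fun i => U₁ p (i, x.2)) (fun i => U₂ p (i, x.2)) x.1 with hU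
  set V : Matrix (Fin b) (Fin (k₁ + k₂) × Fin r) ℝ := fun l x =>
    Fin.addCases (fun i => V₁ l (i, x.2)) (fun i => V₂ l (i, x.2)) x.1 with hV
  have hmul : U * V.transpose = U₁ * V₁.transpose + U₂ * V₂.transpose := by
    ext p l
    simp only [Matrix.add_apply, Matrix.mul_apply, Matrix.transpose_apply]
    rw [Fintype.sum_prod_type, Fin.sum_univ_add, Fintype.sum_prod_type, Fintype.sum_prod_type]
    congr 1 <;> · refine Finset.sum_congr rfl fun i _ => ?_
                  refine Finset.sum_congr rfl fun s _ => ?_; simp [hU, hV]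
  refine ⟨k₁ + k₂, le_trans hk₁ (Nat.le_add_right _ _), U, V, ?_, ?_⟩
  · rw [hmul, Matrix.add_mul, hUV₁, hUV₂]
  · unfold tval
    rw [Fin.sum_univ_add]
    congr 1 <;> · refine Finset.sum_congr rfl fun i _ => ?_; congr 1
                  refine Finset.sum_congr rfl fun p _ => ?_
                  refine Finset.sum_congr rfl fun q _ => ?_; congr 1
                  refine Finset.sum_congr rfl fun s _ => ?_; simp [hU, hV]

end Stmt8Aux

/-- The function `ω(A) = inf over factorizations A = U Vᵀ X of Σ_i ‖U_i V_iᵀ X‖_F`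
is positively homogeneous and subadditive (a gauge), and hence `ω²` is convex. -/
theorem stmt8 (a b n r : ℕ) (hr : 1 ≤ r)
    (X : Matrix (Fin b) (Fin n) ℝ) (hX : X.rank = n)
    (ω : Matrix (Fin a) (Fin n) ℝ → ℝ)
    (hω : ∀ A, ω A = sInf { t : ℝ | ∃ (k : ℕ) (_ : 1 ≤ k)
        (U : Matrix (Fin a) (Fin k × Fin r) ℝ) (V : Matrix (Fin b) (Fin k × Fin r) ℝ),
        U * V.transpose * X = A ∧
        t = ∑ i : Fin k, Real.sqrt (∑ p, ∑ q,
          (∑ s : Fin r, U p (i, s) * (∑ l, V l (i, s) * X l q)) ^ 2) }) :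
    (∀ (c : ℝ), 0 ≤ c → ∀ A, ω (c • A) = c * ω A) ∧
    (∀ A B, ω (A + B) ≤ ω A + ω B) ∧
    ConvexOn ℝ Set.univ (fun A => (ω A) ^ 2) := by
  have hS : ∀ A, ω A = sInf (Stmt8Aux.S r X A) := fun A => hω A
  obtain ⟨Y, hY⟩ := Stmt8Aux.exists_left_inv X hX
  have hne : ∀ A : Matrix (Fin a) (Fin n) ℝ, (Stmt8Aux.S r X A).Nonempty :=
    Stmt8Aux.S_nonempty hr X Y hY
  have hle : ∀ (A : Matrix (Fin a) (Fin n) ℝ) (t : ℝ), t ∈ Stmt8Aux.S r X A → ω A ≤ t :=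
    fun A t ht => (hS A) ▸ csInf_le (Stmt8Aux.S_bddBelow X A) ht
  have hge : ∀ (A : Matrix (Fin a) (Fin n) ℝ) (lb : ℝ),
      (∀ t ∈ Stmt8Aux.S r X A, lb ≤ t) → lb ≤ ω A :=
    fun A lb h => (hS A) ▸ le_csInf (hne A) h
  have hωnn : ∀ A, 0 ≤ ω A := fun A => hge A 0 fun t ht => Stmt8Aux.S_nonneg ht
  -- homogeneity
  have homog : ∀ (c : ℝ), 0 ≤ c → ∀ A, ω (c • A) = c * ω A := by
    intro c hc A
    rcases eq_or_lt_of_le hc with h0 | hcpos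
    · -- c = 0
      subst h0
      have h1 : ω ((0:ℝ) • A) ≤ 0 := by
        obtain ⟨t, ht⟩ := hne A
        have := hle _ _ (Stmt8Aux.smul_mem ht (le_refl (0:ℝ)))
        simpa using this
      have h2 := hωnn ((0:ℝ) • A)
      linarith [le_antisymm h1 h2]
    · refine le_antisymm ?_ ?_
      · -- ω (c • A) ≤ c * ω A
        have key : ∀ t ∈ Stmt8Aux.S r X A, ω (c • A) ≤ c * t :=
          fun t ht => hle _ _ (Stmt8Aux.smul_mem ht hc)
        have h1 : ω (c • A) / c ≤ ω A :=
          hge A _ fun t ht => (div_le_iff₀ hcpos).mpr (by linarith [key t ht, mul_comm c t])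
        calc ω (c • A) = c * (ω (c • A) / c) := by field_simp
          _ ≤ c * ω A := mul_le_mul_of_nonneg_left h1 hc
      · -- c * ω A ≤ ω (c • A)
        have key : ∀ t ∈ Stmt8Aux.S r X (c • A), ω A ≤ c⁻¹ * t := by
          intro t ht
          have hmem := Stmt8Aux.smul_mem ht (inv_nonneg.mpr hc)
          rw [smul_smul, inv_mul_cancel₀ (ne_of_gt hcpos), one_smul] at hmem
          exact hle _ _ hmem
        refine hge (c • A) _ fun t ht => ?_
        have := key t ht
        have := mul_le_mul_of_nonneg_left this hc
        calc c * ω A ≤ c * (c⁻¹ * t) := this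
          _ = t := by field_simp
  -- subadditivity
  have subadd : ∀ A B, ω (A + B) ≤ ω A + ω B := by
    intro A B
    have key : ∀ t₁ ∈ Stmt8Aux.S r X A, ∀ t₂ ∈ Stmt8Aux.S r X B, ω (A + B) ≤ t₁ + t₂ :=
      fun t₁ h₁ t₂ h₂ => hle _ _ (Stmt8Aux.add_mem h₁ h₂)
    have h1 : ∀ t₂ ∈ Stmt8Aux.S r X B, ω (A + B) - t₂ ≤ ω A :=
      fun t₂ ht₂ => hge A _ fun t₁ ht₁ => by linarith [key t₁ ht₁ t₂ ht₂]
    have h2 : ω (A + B) - ω A ≤ ω B :=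
      hge B _ fun t₂ ht₂ => by linarith [h1 t₂ ht₂]
    linarith
  refine ⟨homog, subadd, convex_univ, ?_⟩
  intro A _ B _ p q hp hq hpq
  simp only [smul_eq_mul]
  have h0 : ω (p • A + q • B) ≤ p * ω A + q * ω B := by
    calc ω (p • A + q • B) ≤ ω (p • A) + ω (q • B) := subadd _ _
      _ = p * ω A + q * ω B := by rw [homog p hp A, homog q hq B]
  have hnnz := hωnn (p • A + q • B)
  have hA := hωnn A
  have hB := hωnn B
  have hsq : ω (p • A + q • B) ^ 2 ≤ (p * ω A + q * ω B) ^ 2 := by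
    have := mul_self_le_mul_self hnnz h0
    simpa [pow_two] using this
  have hfin : (p * ω A + q * ω B) ^ 2 ≤ p * ω A ^ 2 + q * ω B ^ 2 := by
    nlinarith [sq_nonneg (ω A - ω B), mul_nonneg hp hq,
      mul_nonneg (mul_nonneg hp hq) (sq_nonneg (ω A - ω B))]
  linarith
end

section
/- For α ∈ ℝ^d with nonnegative entries, define the vector of normalized blocks and the replication construction: given d̂ > 0, set r_i = ⌊(α_i/‖α‖₁) d̂⌋ and γ_i = (α_i/‖α‖₁) d̂ − r_i. Then Σ_i r_i ≤ d̂, and the quantity (d̂ + d) [(‖α‖₁/d̂)² Σ_i r_i + Σ_i (γ_i ‖α‖₁/d̂)²] is strictly less than ((d̂+d)/d̂)² ‖α‖₁². -/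
open Finset

/-- Key inequality in the balancing argument: with `r_i = ⌊(α_i/‖α‖₁) d̂⌋` and
`γ_i = (α_i/‖α‖₁) d̂ − r_i`, one has `Σ r_i ≤ d̂` and
`(d̂+d)[(‖α‖₁/d̂)² Σ r_i + Σ (γ_i ‖α‖₁/d̂)²] < ((d̂+d)/d̂)² ‖α‖₁²`. -/
theorem stmt10 (d : ℕ) (α : Fin d → ℝ) (hα : ∀ i, 0 ≤ α i) (hne : α ≠ 0)
    (dh : ℕ) (hdh : 0 < dh)
    (rr : Fin d → ℕ) (hr : ∀ i, rr i = ⌊(α i / (∑ j, α j)) * dh⌋₊)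
    (γ : Fin d → ℝ) (hγ : ∀ i, γ i = (α i / (∑ j, α j)) * dh - rr i) :
    ((∑ i, (rr i : ℝ)) ≤ dh) ∧
    ((dh + d : ℝ) * (((∑ j, α j) / dh) ^ 2 * (∑ i, (rr i : ℝ))
        + ∑ i, (γ i * (∑ j, α j) / dh) ^ 2)
      < (((dh : ℝ) + d) / dh) ^ 2 * (∑ j, α j) ^ 2) := by
  set S := ∑ j, α j with hSdef
  have hd : 0 < d := by
    rcases Nat.eq_zero_or_pos d with h | h
    · exfalso; apply hne; funext i; exact absurd i.2 (by omega)
    · exact h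
  have hSpos : 0 < S := by
    have hex : ∃ i, α i ≠ 0 := by
      by_contra h
      push_neg at h
      exact hne (funext h)
    obtain ⟨i, hi⟩ := hex
    exact Finset.sum_pos' (fun j _ => hα j) ⟨i, Finset.mem_univ i, lt_of_le_of_ne (hα i) (Ne.symm hi)⟩
  have hDpos : (0:ℝ) < dh := Nat.cast_pos.mpr hdh
  -- x_i := (α i / S) * dh
  have hxnn : ∀ i, 0 ≤ (α i / S) * dh := fun i =>
    mul_nonneg (div_nonneg (hα i) hSpos.le) hDpos.le
  have hxsum : ∑ i, (α i / S) * dh = dh := by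
    rw [← Finset.sum_mul, ← Finset.sum_div]
    field_simp
    exact hSdef.symm
  have hrle : ∀ i, (rr i : ℝ) ≤ (α i / S) * dh := by
    intro i
    rw [hr i]
    exact Nat.floor_le (hxnn i)
  have hγlt : ∀ i, γ i < 1 := by
    intro i
    rw [hγ i, hr i]
    have := Nat.lt_floor_add_one ((α i / S) * dh)
    linarith
  have hγnn' : ∀ i, 0 ≤ γ i := by
    intro i
    rw [hγ i, hr i]
    linarith [Nat.floor_le (hxnn i)]
  have hpart1 : (∑ i, (rr i : ℝ)) ≤ dh := by
    calc (∑ i, (rr i : ℝ)) ≤ ∑ i, (α i / S) * dh := Finset.sum_le_sum fun i _ => hrle i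
    _ = dh := hxsum
  refine ⟨hpart1, ?_⟩
  have hγsq : ∀ i, γ i ^ 2 ≤ γ i := by
    intro i
    nlinarith [hγnn' i, hγlt i]
  have hsum2 : (∑ i, (rr i : ℝ)) + ∑ i, γ i ^ 2 ≤ dh := by
    have h1 : ∑ i, γ i ^ 2 ≤ ∑ i, γ i := Finset.sum_le_sum fun i _ => hγsq i
    have h2 : (∑ i, (rr i : ℝ)) + ∑ i, γ i = dh := by
      rw [← Finset.sum_add_distrib]
      calc (∑ i, ((rr i : ℝ) + γ i)) = ∑ i, (α i / S) * dh := by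
            apply Finset.sum_congr rfl
            intro i _
            rw [hγ i]; ring
      _ = dh := hxsum
    linarith
  have hrw : ∑ i, (γ i * S / dh) ^ 2 = (S / dh) ^ 2 * ∑ i, γ i ^ 2 := by
    rw [Finset.mul_sum]
    apply Finset.sum_congr rfl
    intro i _
    field_simp
  rw [hrw]
  have hrnn : 0 ≤ ∑ i, (rr i : ℝ) := Finset.sum_nonneg fun i _ => Nat.cast_nonneg _
  have key : ((dh:ℝ) + d) * ((S / dh) ^ 2 * ((∑ i, (rr i : ℝ)) + ∑ i, γ i ^ 2))
      < (((dh:ℝ) + d) / dh) ^ 2 * S ^ 2 := by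
    have hsd : (S / dh) ^ 2 > 0 := by positivity
    have h1 : ((dh:ℝ) + d) * ((S / dh) ^ 2 * ((∑ i, (rr i : ℝ)) + ∑ i, γ i ^ 2))
        ≤ ((dh:ℝ) + d) * ((S / dh) ^ 2 * dh) := by
      apply mul_le_mul_of_nonneg_left _ (by positivity)
      exact mul_le_mul_of_nonneg_left hsum2 hsd.le
    have h2 : ((dh:ℝ) + d) * ((S / dh) ^ 2 * dh) < (((dh:ℝ) + d) / dh) ^ 2 * S ^ 2 := by
      have hdpos : (0:ℝ) < d := Nat.cast_pos.mpr hd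
      have hDne : (dh:ℝ) ≠ 0 := ne_of_gt hDpos
      rw [show ((dh:ℝ)+d)*((S/dh)^2*dh) = (((dh:ℝ)+d)*S^2)/dh by field_simp,
          show (((dh:ℝ)+d)/dh)^2*S^2 = (((dh:ℝ)+d)^2*S^2)/dh^2 by field_simp]
      rw [div_lt_div_iff₀ hDpos (by positivity)]
      have hpos : 0 < ((dh:ℝ)+d) * S^2 * dh * d := by positivity
      nlinarith [hpos]
    linarith
  calc ((dh:ℝ) + d) * ((S / dh) ^ 2 * (∑ i, (rr i : ℝ)) + (S / dh) ^ 2 * ∑ i, γ i ^ 2)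
      = ((dh:ℝ) + d) * ((S / dh) ^ 2 * ((∑ i, (rr i : ℝ)) + ∑ i, γ i ^ 2)) := by ring
  _ < (((dh:ℝ) + d) / dh) ^ 2 * S ^ 2 := key
end

section
/- Fix β > 0, an integer r ≥ 1, and a ∈ ℝ^d with a₁ ≥ a₂ ≥ ... ≥ a_d ≥ 0. For ρ ∈ {1,...,r} with (2/(r−ρ+1)) Σ_{i=ρ}^d a_i ≤ 2 a_{ρ−1} (vacuous if ρ=1), the supremum of Σ_{i=1}^d a_i x_i − (1/4) Σ_{i=1}^r x_i² over x₁ ≥ x₂ ≥ ... ≥ x_d ≥ 0 with x_ρ = x_{ρ+1} = ... = x_d is attained at x_i = 2a_i for i < ρ and x_i = (2/(r−ρ+1)) Σ_{j=ρ}^d a_j for i ≥ ρ, with value Σ_{i=1}^{ρ−1} a_i² + (Σ_{i=ρ}^d a_i)²/(r−ρ+1). -/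
open Finset

/-- Core computation in the Fenchel biconjugate of the DropBlock regularizer.
Indices are 0-based: the paper's `a_1 ≥ ... ≥ a_d ≥ 0` is `a 0, ..., a (d-1)` here.
For `ρ ∈ {1,...,r}` with `(2/(r−ρ+1)) Σ_{i=ρ}^d a_i ≤ 2 a_{ρ−1}` (vacuous if `ρ = 1`),
the supremum of `Σ a_i x_i − (1/4) Σ_{i≤r} x_i²` over nonincreasing nonnegative `x`
constant on indices `≥ ρ` is attained at `x_i = 2a_i` (`i < ρ`),
`x_i = (2/(r−ρ+1)) Σ_{j≥ρ} a_j` (`i ≥ ρ`), with value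
`Σ_{i<ρ} a_i² + (Σ_{i≥ρ} a_i)²/(r−ρ+1)`. -/
theorem stmt12 (d r ρ : ℕ) (β : ℝ) (hβ : 0 < β)
    (hρ1 : 1 ≤ ρ) (hρr : ρ ≤ r) (hrd : r ≤ d)
    (a : ℕ → ℝ) (ha0 : ∀ i, i < d → 0 ≤ a i)
    (hmono : ∀ i j, i ≤ j → j < d → a j ≤ a i)
    (hcond : ρ = 1 ∨
      (2 / ((r : ℝ) - ρ + 1)) * ∑ i ∈ Finset.Ico (ρ - 1) d, a i ≤ 2 * a (ρ - 2)) :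
    (((∑ i ∈ Finset.range d, a i *
          (if i < ρ - 1 then 2 * a i
            else (2 / ((r : ℝ) - ρ + 1)) * ∑ j ∈ Finset.Ico (ρ - 1) d, a j))
        - (1 / 4) * ∑ i ∈ Finset.range r,
          (if i < ρ - 1 then 2 * a i
            else (2 / ((r : ℝ) - ρ + 1)) * ∑ j ∈ Finset.Ico (ρ - 1) d, a j) ^ 2)
      = (∑ i ∈ Finset.range (ρ - 1), (a i) ^ 2)
        + (∑ i ∈ Finset.Ico (ρ - 1) d, a i) ^ 2 / ((r : ℝ) - ρ + 1)) ∧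
    IsGreatest { v : ℝ | ∃ x : ℕ → ℝ,
        (∀ i, i < d → 0 ≤ x i) ∧
        (∀ i j, i ≤ j → j < d → x j ≤ x i) ∧
        (∀ i j, ρ - 1 ≤ i → i < d → ρ - 1 ≤ j → j < d → x i = x j) ∧
        v = (∑ i ∈ Finset.range d, a i * x i)
          - (1 / 4) * ∑ i ∈ Finset.range r, (x i) ^ 2 }
      ((∑ i ∈ Finset.range (ρ - 1), (a i) ^ 2)
        + (∑ i ∈ Finset.Ico (ρ - 1) d, a i) ^ 2 / ((r : ℝ) - ρ + 1)) := by
  set p := ρ - 1 with hp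
  have hpr : p < r := lt_of_lt_of_le (Nat.sub_lt hρ1 one_pos) hρr
  have hpd : p < d := lt_of_lt_of_le hpr hrd
  set m := r - p with hm
  have hm0 : 0 < m := Nat.sub_pos_of_lt hpr
  have hmR : (m : ℝ) = (r : ℝ) - ρ + 1 := by
    have h1 : ((m : ℕ) : ℝ) = (r : ℝ) - (p : ℝ) := by
      rw [hm]; exact_mod_cast Nat.cast_sub hpr.le
    have h2 : (p : ℝ) = (ρ : ℝ) - 1 := by
      rw [hp]; push_cast [Nat.cast_sub hρ1]; ring
    rw [h1, h2]; ring
  have hmpos : (0 : ℝ) < (m : ℝ) := by exact_mod_cast hm0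
  rw [← hmR] at hcond ⊢
  set S := ∑ i ∈ Finset.Ico p d, a i with hSdef
  have hS0 : 0 ≤ S := Finset.sum_nonneg fun i hi => ha0 i (Finset.mem_Ico.mp hi).2
  set c := 2 / (m : ℝ) * S with hc
  have hc0 : 0 ≤ c := by positivity
  have hsplit : ∀ (n : ℕ), p ≤ n → ∀ g : ℕ → ℝ,
      ∑ i ∈ Finset.range n, g i = ∑ i ∈ Finset.range p, g i + ∑ i ∈ Finset.Ico p n, g i := by
    intro n hn g
    rw [Finset.range_eq_Ico, ← Finset.sum_Ico_consecutive _ (Nat.zero_le p) hn,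
      ← Finset.range_eq_Ico]
  -- the key equality
  have key : (∑ i ∈ Finset.range d, a i * (if i < p then 2 * a i else c))
      - (1 / 4) * ∑ i ∈ Finset.range r, (if i < p then 2 * a i else c) ^ 2
      = (∑ i ∈ Finset.range p, (a i) ^ 2) + S ^ 2 / (m : ℝ) := by
    rw [hsplit d hpd.le, hsplit r hpr.le]
    have e1 : ∑ i ∈ Finset.range p, a i * (if i < p then 2 * a i else c)
        = 2 * ∑ i ∈ Finset.range p, (a i) ^ 2 := by
      rw [Finset.mul_sum]
      exact Finset.sum_congr rfl fun i hi => by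
        rw [if_pos (Finset.mem_range.mp hi)]; ring
    have e2 : ∑ i ∈ Finset.Ico p d, a i * (if i < p then 2 * a i else c) = S * c := by
      rw [hSdef, Finset.sum_mul]
      exact Finset.sum_congr rfl fun i hi => by
        rw [if_neg (not_lt.mpr (Finset.mem_Ico.mp hi).1)]
    have e3 : ∑ i ∈ Finset.range p, (if i < p then 2 * a i else c) ^ 2
        = 4 * ∑ i ∈ Finset.range p, (a i) ^ 2 := by
      rw [Finset.mul_sum]
      exact Finset.sum_congr rfl fun i hi => by
        rw [if_pos (Finset.mem_range.mp hi)]; ring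
    have e4 : ∑ i ∈ Finset.Ico p r, (if i < p then 2 * a i else c) ^ 2 = (m : ℝ) * c ^ 2 := by
      have h5 : ∀ i ∈ Finset.Ico p r, (if i < p then 2 * a i else c) ^ 2 = c ^ 2 := fun i hi => by
        rw [if_neg (not_lt.mpr (Finset.mem_Ico.mp hi).1)]
      rw [Finset.sum_congr rfl h5, Finset.sum_const, Nat.card_Ico, ← hm, nsmul_eq_mul]
    rw [e1, e2, e3, e4, hc]
    field_simp
    ring
  refine ⟨key, ⟨⟨fun i => if i < p then 2 * a i else c, ?_, ?_, ?_, key.symm⟩, ?_⟩⟩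
  · intro i hid
    dsimp only
    split_ifs with h
    · have := ha0 i hid; linarith
    · exact hc0
  · intro i j hij hjd
    dsimp only
    split_ifs with h1 h2 h2
    · have := hmono i j hij hjd; linarith
    · exact absurd (lt_of_le_of_lt hij h1) h2
    · have hρ2 : 2 ≤ ρ := by omega
      have hcc : c ≤ 2 * a (ρ - 2) := by
        rcases hcond with h | h
        · omega
        · exact h
      have heq : ρ - 2 = p - 1 := by omega
      rw [heq] at hcc
      have : a (p - 1) ≤ a i := hmono i (p - 1) (by omega) (by omega)
      linarith
    · exact le_rfl
  · intro i j hi _ hj _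
    dsimp only
    simp only [if_neg (not_lt.mpr hi), if_neg (not_lt.mpr hj)]
  -- upper bound
  · rintro v ⟨x, hx0, hxm, hxc, rfl⟩
    have ht : ∀ i, p ≤ i → i < d → x i = x p := fun i hpi hid =>
      hxc i p hpi hid le_rfl hpd
    set t := x p with htdef
    rw [hsplit d hpd.le, hsplit r hpr.le]
    have e2 : ∑ i ∈ Finset.Ico p d, a i * x i = S * t := by
      rw [hSdef, Finset.sum_mul]
      exact Finset.sum_congr rfl fun i hi => by
        rw [ht i (Finset.mem_Ico.mp hi).1 (Finset.mem_Ico.mp hi).2]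
    have e4 : ∑ i ∈ Finset.Ico p r, (x i) ^ 2 = (m : ℝ) * t ^ 2 := by
      have h5 : ∀ i ∈ Finset.Ico p r, (x i) ^ 2 = t ^ 2 := fun i hi => by
        rw [ht i (Finset.mem_Ico.mp hi).1 (lt_of_lt_of_le (Finset.mem_Ico.mp hi).2 hrd)]
      rw [Finset.sum_congr rfl h5, Finset.sum_const, Nat.card_Ico, ← hm, nsmul_eq_mul]
    rw [e2, e4]
    have h1 : ∑ i ∈ Finset.range p, a i * x i
        ≤ ∑ i ∈ Finset.range p, ((a i) ^ 2 + (x i) ^ 2 / 4) := by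
      refine Finset.sum_le_sum fun i _ => ?_
      nlinarith [sq_nonneg (a i - x i / 2)]
    have h1' : ∑ i ∈ Finset.range p, ((a i) ^ 2 + (x i) ^ 2 / 4)
        = ∑ i ∈ Finset.range p, (a i) ^ 2 + (1/4) * ∑ i ∈ Finset.range p, (x i) ^ 2 := by
      rw [Finset.sum_add_distrib, Finset.mul_sum]
      congr 1
      exact Finset.sum_congr rfl fun i _ => by ring
    have h2 : S * t - 1 / 4 * ((m : ℝ) * t ^ 2) ≤ S ^ 2 / (m : ℝ) := by
      rw [le_div_iff₀ hmpos]
      nlinarith [sq_nonneg ((m : ℝ) * t - 2 * S)]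
    rw [h1'] at h1
    linarith
end
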